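/- (Theorem 2) Let S be a finite state space and A an action space, let R : S → A → S → ℝ be a reward function, let γ ∈ ℝ with 0 ≤ γ < 1, let φ : S → ℝ be a potential, and let R̂ be the potential-based shaping of R by φ. Fix M ∈ ℕ, and suppose for each length L ∈ ℕ we are given an expert trajectory τ^L of length L and a family (τ^L_j)_{j=1}^M of trajectories of length L with the same starting state as τ^L. Then the difference of ρ-projections vanishes in the limit: ρ_{τ^L}(R̂) − ρ_{τ^L}(R) → 0 as L → ∞. -/

import Mathlib

/-- The discounted reward of a trajectory `(s, a)` of length `L`:
`R(τ) = ∑_{t=0}^{L-1} γ^t · R(s_t, a_t, s_{t+1})`. -/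
noncomputable def discReward {S A : Type*} (R : S → A → S → ℝ) (γ : ℝ) (L : ℕ)
    (s : Fin (L + 1) → S) (a : Fin L → A) : ℝ :=
  ∑ t : Fin L, γ ^ (t : ℕ) * R (s t.castSucc) (a t) (s t.succ)

/-- The ρ-projection of a reward function `R`, given an expert trajectory `(s, a)` of
length `L` and a family of `M` trajectories `(s' j, a' j)` of length `L`:
`ρ_τ(R) = exp(R(τ)) / (exp(R(τ)) + ∑_{j=1}^M exp(R(τ_j)))`. -/
noncomputable def rhoProj {S A : Type*} (γ : ℝ) (L M : ℕ)
    (s : Fin (L + 1) → S) (a : Fin L → A)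
    (s' : Fin M → Fin (L + 1) → S) (a' : Fin M → Fin L → A)
    (R : S → A → S → ℝ) : ℝ :=
  Real.exp (discReward R γ L s a) /
    (Real.exp (discReward R γ L s a) +
      ∑ j : Fin M, Real.exp (discReward R γ L (s' j) (a' j)))


open Filter


lemma discReward_shaped {S A : Type*} (R : S → A → S → ℝ) (γ : ℝ) (φ : S → ℝ) (L : ℕ)
    (s : Fin (L + 1) → S) (a : Fin L → A) :
    discReward (fun x y z => R x y z + γ * φ z - φ x) γ L s a
      = discReward R γ L s a + (γ ^ L * φ (s (Fin.last L)) - φ (s 0)) := by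
  classical
  set g : ℕ → ℝ := fun n => γ ^ n * φ (s ⟨min n L, by omega⟩) with hg
  have hterm : ∀ t : Fin L,
      γ ^ (t : ℕ) * (R (s t.castSucc) (a t) (s t.succ) + γ * φ (s t.succ) - φ (s t.castSucc))
        = γ ^ (t : ℕ) * R (s t.castSucc) (a t) (s t.succ) + (g ((t : ℕ) + 1) - g (t : ℕ)) := by
    intro t
    have h1 : s ⟨min ((t : ℕ) + 1) L, by omega⟩ = s t.succ := by
      congr 1; apply Fin.ext; simp only [Fin.val_succ]; omega
    have h2 : s ⟨min (t : ℕ) L, by omega⟩ = s t.castSucc := by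
      congr 1; apply Fin.ext; simp only [Fin.coe_castSucc]; omega
    rw [hg]
    simp only [h1, h2]
    rw [pow_succ]
    ring
  unfold discReward
  rw [Finset.sum_congr rfl (fun t _ => hterm t), Finset.sum_add_distrib]
  congr 1
  rw [Fin.sum_univ_eq_sum_range (fun i => g (i + 1) - g i) L, Finset.sum_range_sub g]
  have hL : s ⟨min L L, by omega⟩ = s (Fin.last L) := by
    congr 1; apply Fin.ext; simp
  have h0 : s ⟨min 0 L, by omega⟩ = s 0 := by
    congr 1
  simp only [hg]
  rw [hL, h0, pow_zero, one_mul]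

lemma rho_shift (M : ℕ) (x c : ℝ) (y : Fin M → ℝ) :
    Real.exp (x + c) / (Real.exp (x + c) + ∑ j, Real.exp (y j + c))
      = Real.exp x / (Real.exp x + ∑ j, Real.exp (y j)) := by
  simp only [Real.exp_add, ← Finset.sum_mul]
  rw [← add_mul, mul_div_mul_right _ _ (Real.exp_ne_zero c)]

lemma keyineq (N T N' T' E : ℝ) (hN : 0 < N) (hT : 0 ≤ T) (hE : 1 ≤ E)
    (h1 : N / E ≤ N') (h2 : N' ≤ E * N) (h3 : T / E ≤ T') (h4 : T' ≤ E * T) :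
    |N' / (N' + T') - N / (N + T)| ≤ 1 - 1 / E ^ 2 := by
  have hEpos : (0 : ℝ) < E := lt_of_lt_of_le one_pos hE
  have hh1 : N ≤ E * N' := by rw [div_le_iff₀ hEpos] at h1; linarith [h1]
  have hh3 : T ≤ E * T' := by rw [div_le_iff₀ hEpos] at h3; linarith [h3]
  have hN' : 0 < N' := lt_of_lt_of_le (div_pos hN hEpos) h1
  have hT' : 0 ≤ T' := le_trans (div_nonneg hT hEpos.le) h3
  have hd1 : 0 < N' + T' := by linarith
  have hd2 : 0 < N + T := by linarith
  rw [div_sub_div _ _ hd1.ne' hd2.ne', abs_div, abs_of_pos (mul_pos hd1 hd2),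
    div_le_iff₀ (mul_pos hd1 hd2)]
  have hnum : N' * (N + T) - (N' + T') * N = N' * T - N * T' := by ring
  rw [hnum]
  have hE2 : (0 : ℝ) < E ^ 2 := by positivity
  rw [show (1 : ℝ) - 1 / E ^ 2 = (E ^ 2 - 1) / E ^ 2 by field_simp]
  rw [div_mul_eq_mul_div, le_div_iff₀ hE2]
  have hA : N' * T ≤ E ^ 2 * (N * T') := by nlinarith [mul_le_mul_of_nonneg_right h2 hT, mul_le_mul_of_nonneg_left hh3 (mul_pos hEpos hN).le]
  have hB : N * T' ≤ E ^ 2 * (N' * T) := by nlinarith [mul_le_mul_of_nonneg_right hh1 hT', mul_le_mul_of_nonneg_left h4 (mul_pos hEpos hN').le]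
  have hp1 : 0 ≤ N' * N := by positivity
  have hp2 : 0 ≤ N' * T := mul_nonneg hN'.le hT
  have hp3 : 0 ≤ T' * N := mul_nonneg hT' hN.le
  have hp4 : 0 ≤ T' * T := mul_nonneg hT' hT
  rcases abs_cases (N' * T - N * T') with ⟨he, _⟩ | ⟨he, _⟩ <;> rw [he] <;> nlinarith [hA, hB, hp1, hp2, hp3, hp4, hE2]

/-- Theorem 2: With a finite state space `S`, discount `0 ≤ γ < 1`, and for
each length `L` an expert trajectory of length `L` together with a family of `M`
trajectories of length `L` sharing its starting state, the difference between the
ρ-projection of the potential-based shaped reward `R̂` and that of `R` tends to `0` as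
`L → ∞`. -/
theorem rhoProj_shaped_sub_tendsto_zero {S A : Type*} [Fintype S]
    (R : S → A → S → ℝ) (γ : ℝ) (hγ0 : 0 ≤ γ) (hγ1 : γ < 1) (φ : S → ℝ) (M : ℕ)
    (s : (L : ℕ) → Fin (L + 1) → S) (a : (L : ℕ) → Fin L → A)
    (s' : (L : ℕ) → Fin M → Fin (L + 1) → S) (a' : (L : ℕ) → Fin M → Fin L → A)
    (hstart : ∀ (L : ℕ) (j : Fin M), s' L j 0 = s L 0) :
    Tendsto (fun L : ℕ =>
        rhoProj γ L M (s L) (a L) (s' L) (a' L) (fun x y z => R x y z + γ * φ z - φ x) -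
          rhoProj γ L M (s L) (a L) (s' L) (a' L) R)
      atTop (nhds 0) := by
  classical
  set C : ℝ := ∑ z : S, |φ z| with hCdef
  have hC : ∀ z : S, |φ z| ≤ C :=
    fun z => Finset.single_le_sum (fun i _ => abs_nonneg (φ i)) (Finset.mem_univ z)
  have hC0 : 0 ≤ C := Finset.sum_nonneg (fun i _ => abs_nonneg (φ i))
  -- the bounding sequence
  apply squeeze_zero_norm (a := fun L : ℕ => 1 - Real.exp (-(2 * (γ ^ L * C))))
  · intro L
    set δ : ℝ := γ ^ L * C with hδdef
    have hδ0 : 0 ≤ δ := mul_nonneg (pow_nonneg hγ0 L) hC0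
    set E : ℝ := Real.exp δ with hEdef
    have hE1 : 1 ≤ E := Real.one_le_exp hδ0
    set N : ℝ := Real.exp (discReward R γ L (s L) (a L)) with hNdef
    set T : ℝ := ∑ j : Fin M, Real.exp (discReward R γ L (s' L j) (a' L j)) with hTdef
    set N' : ℝ := Real.exp (discReward R γ L (s L) (a L) + γ ^ L * φ (s L (Fin.last L)))
      with hN'def
    set T' : ℝ := ∑ j : Fin M,
      Real.exp (discReward R γ L (s' L j) (a' L j) + γ ^ L * φ (s' L j (Fin.last L)))
      with hT'def
    -- pointwise exponential bounds
    have hbnd : ∀ (x : ℝ) (u : S),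
        Real.exp x / E ≤ Real.exp (x + γ ^ L * φ u) ∧
        Real.exp (x + γ ^ L * φ u) ≤ E * Real.exp x := by
      intro x u
      have hp : (0 : ℝ) ≤ γ ^ L := pow_nonneg hγ0 L
      have habs : |φ u| ≤ C := hC u
      have hub : γ ^ L * φ u ≤ δ := by
        rw [hδdef]
        exact mul_le_mul_of_nonneg_left (le_trans (le_abs_self _) habs) hp
      have hlb : -δ ≤ γ ^ L * φ u := by
        rw [hδdef]
        nlinarith [neg_abs_le (φ u), mul_le_mul_of_nonneg_left habs hp]
      constructor
      · rw [hEdef, div_eq_mul_inv, ← Real.exp_neg, ← Real.exp_add]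
        exact Real.exp_le_exp.2 (by linarith)
      · rw [hEdef, ← Real.exp_add]
        exact Real.exp_le_exp.2 (by linarith)
    have h1 : N / E ≤ N' := (hbnd _ _).1
    have h2 : N' ≤ E * N := (hbnd _ _).2
    have h3 : T / E ≤ T' := by
      rw [hTdef, hT'def, Finset.sum_div]
      exact Finset.sum_le_sum (fun j _ => (hbnd _ _).1)
    have h4 : T' ≤ E * T := by
      rw [hTdef, hT'def, Finset.mul_sum]
      exact Finset.sum_le_sum (fun j _ => (hbnd _ _).2)
    have hN : 0 < N := Real.exp_pos _
    have hT : 0 ≤ T := Finset.sum_nonneg (fun j _ => (Real.exp_pos _).le)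
    have hkey := keyineq N T N' T' E hN hT hE1 h1 h2 h3 h4
    -- identify the shaped rhoProj with N'/(N'+T')
    have hshaped : rhoProj γ L M (s L) (a L) (s' L) (a' L)
        (fun x y z => R x y z + γ * φ z - φ x) = N' / (N' + T') := by
      unfold rhoProj
      simp only [discReward_shaped]
      have e1 : ∀ (x : ℝ) (u : S) (v : S),
          x + (γ ^ L * φ u - φ v) = (x + γ ^ L * φ u) + (-φ v) := by intros; ring
      simp only [hstart, e1]
      rw [rho_shift M (discReward R γ L (s L) (a L) + γ ^ L * φ (s L (Fin.last L)))
        (-φ (s L 0)) (fun j => discReward R γ L (s' L j) (a' L j)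
          + γ ^ L * φ (s' L j (Fin.last L)))]
    have hplain : rhoProj γ L M (s L) (a L) (s' L) (a' L) R = N / (N + T) := rfl
    rw [Real.norm_eq_abs, hshaped, hplain]
    calc |N' / (N' + T') - N / (N + T)| ≤ 1 - 1 / E ^ 2 := hkey
      _ = 1 - Real.exp (-(2 * δ)) := by
          rw [hEdef, sq, ← Real.exp_add, one_div, ← Real.exp_neg]
          ring_nf
  · have hpow : Tendsto (fun L : ℕ => γ ^ L) atTop (nhds 0) :=
      tendsto_pow_atTop_nhds_zero_of_lt_one hγ0 hγ1
    have hcont : Continuous fun t : ℝ => 1 - Real.exp (-(2 * (t * C))) := by continuity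
    have h0 : Tendsto (fun t : ℝ => 1 - Real.exp (-(2 * (t * C)))) (nhds 0) (nhds 0) := by
      have := hcont.tendsto 0
      simpa using this
    exact h0.comp hpow
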